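/- Let F be a linearly ordered field, A and B magnitudes of F, and a, b ∈ F. Then the set M = a • B + b • A + A * B (Minkowski operations) is a magnitude of F (an order-convex additive subgroup), and consequently the product of the cosets a + A and b + B, defined as {a·b} + a • B + b • A + A * B, is itself a coset, namely a·b + M. -/

import Mathlib

open Pointwise

/-- A *magnitude* of a linearly ordered field `F` is an order-convex additive subgroup of `F`,
given as a set: it contains `0`, is closed under addition and negation, and is order-convex. -/
def IsMagnitude {F : Type*} [Field F] [LinearOrder F] [IsStrictOrderedRing F] (A : Set F) : Prop :=
  (0 : F) ∈ A ∧ (∀ x ∈ A, ∀ y ∈ A, x + y ∈ A) ∧ (∀ x ∈ A, -x ∈ A) ∧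
    (∀ x ∈ A, ∀ y ∈ A, ∀ z : F, x ≤ z → z ≤ y → z ∈ A)

/-- Order relation on subsets of `F`: `S ≤ T` iff every element of `S` is below some element of `T`. -/
def SetLE {F : Type*} [Field F] [LinearOrder F] [IsStrictOrderedRing F] (S T : Set F) : Prop :=
  ∀ x ∈ S, ∃ y ∈ T, x ≤ y

section Aux

variable {F : Type*} [Field F] [LinearOrder F] [IsStrictOrderedRing F]

lemma IsMagnitude.abs_mem {A : Set F} (hA : IsMagnitude A) {x : F} (hx : x ∈ A) : |x| ∈ A := by
  rcases abs_choice x with h | h <;> rw [h]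
  · exact hx
  · exact hA.2.2.1 x hx

lemma mag_subset_total {A B : Set F} (hA : IsMagnitude A) (hB : IsMagnitude B) :
    A ⊆ B ∨ B ⊆ A := by
  by_cases h : A ⊆ B
  · exact Or.inl h
  · right
    rw [Set.not_subset] at h
    obtain ⟨s, hsA, hsB⟩ := h
    intro t htB
    rcases le_total |t| |s| with hle | hle
    · have h1 : -|s| ∈ A := hA.2.2.1 _ (hA.abs_mem hsA)
      exact hA.2.2.2 _ h1 _ (hA.abs_mem hsA) t (by linarith [neg_abs_le t, le_abs_self t])
        (le_trans (le_abs_self t) hle)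
    · exfalso
      apply hsB
      have h1 : -|t| ∈ B := hB.2.2.1 _ (hB.abs_mem htB)
      exact hB.2.2.2 _ h1 _ (hB.abs_mem htB) s (by linarith [neg_abs_le s, le_abs_self s])
        (le_trans (le_abs_self s) hle)

lemma mag_smul {B : Set F} (hB : IsMagnitude B) (a : F) : IsMagnitude (a • B) := by
  refine ⟨⟨0, hB.1, smul_zero a⟩, ?_, ?_, ?_⟩
  · rintro _ ⟨x, hx, rfl⟩ _ ⟨y, hy, rfl⟩
    exact ⟨x + y, hB.2.1 x hx y hy, by simp [smul_eq_mul, mul_add]⟩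
  · rintro _ ⟨x, hx, rfl⟩
    exact ⟨-x, hB.2.2.1 x hx, by simp⟩
  · rintro _ ⟨x, hx, rfl⟩ _ ⟨y, hy, rfl⟩ z h1 h2
    simp only [smul_eq_mul] at *
    rcases lt_trichotomy a 0 with ha | ha | ha
    · have ha' : a ≠ 0 := ne_of_lt ha
      refine ⟨z / a, hB.2.2.2 y hy x hx _ ?_ ?_, by show a * (z / a) = z; field_simp⟩
      · rw [le_div_iff_of_neg ha]; linarith
      · rw [div_le_iff_of_neg ha]; linarith
    · subst ha
      have : z = 0 := le_antisymm (by simpa using h2) (by simpa using h1)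
      exact ⟨0, hB.1, by simp [this]⟩
    · refine ⟨z / a, hB.2.2.2 x hx y hy _ ?_ ?_, by show a * (z / a) = z; field_simp⟩
      · rw [le_div_iff₀ ha]; linarith
      · rw [div_le_iff₀ ha]; linarith

lemma mag_mul_key {A B : Set F} (hA : IsMagnitude A) (hB : IsMagnitude B)
    {x y z : F} (hx : x ∈ A) (hy : y ∈ B) (hz : 0 ≤ z) (hle : z ≤ |x| * |y|) :
    z ∈ A * B := by
  rcases eq_or_lt_of_le (abs_nonneg y) with h0 | h0
  · have : z = 0 := le_antisymm (by rw [← h0] at hle; simpa using hle) hz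
    exact ⟨0, hA.1, 0, hB.1, by simp [this]⟩
  · refine ⟨z / |y|, ?_, |y|, hB.abs_mem hy, by field_simp⟩
    refine hA.2.2.2 0 hA.1 _ (hA.abs_mem hx) _ (by positivity) ?_
    rw [div_le_iff₀ h0]
    exact hle

lemma mag_mul {A B : Set F} (hA : IsMagnitude A) (hB : IsMagnitude B) :
    IsMagnitude (A * B) := by
  have hneg : ∀ z ∈ A * B, -z ∈ A * B := by
    rintro _ ⟨x, hx, y, hy, rfl⟩
    exact ⟨-x, hA.2.2.1 x hx, y, hy, by ring⟩
  have habs : ∀ z : F, (∀ x ∈ A, ∀ y ∈ B, |z| ≤ |x| * |y| → z ∈ A * B) := by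
    intro z x hx y hy hle
    rcases le_total 0 z with hz | hz
    · exact mag_mul_key hA hB hx hy hz (by rwa [abs_of_nonneg hz] at hle)
    · have := mag_mul_key hA hB hx hy (by linarith : (0:F) ≤ -z)
        (by rwa [abs_of_nonpos hz] at hle)
      simpa using hneg _ this
  refine ⟨⟨0, hA.1, 0, hB.1, by simp⟩, ?_, hneg, ?_⟩
  · rintro _ ⟨x1, hx1, y1, hy1, rfl⟩ _ ⟨x2, hx2, y2, hy2, rfl⟩
    refine habs _ (|x1| + |x2|) (hA.2.1 _ (hA.abs_mem hx1) _ (hA.abs_mem hx2))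
      (|y1| + |y2|) (hB.2.1 _ (hB.abs_mem hy1) _ (hB.abs_mem hy2)) ?_
    have h1 : |x1 * y1 + x2 * y2| ≤ |x1| * |y1| + |x2| * |y2| := by
      calc |x1 * y1 + x2 * y2| ≤ |x1 * y1| + |x2 * y2| := abs_add_le _ _
        _ = |x1| * |y1| + |x2| * |y2| := by rw [abs_mul, abs_mul]
    show |x1 * y1 + x2 * y2| ≤ |(|x1| + |x2|)| * |(|y1| + |y2|)|
    rw [abs_of_nonneg (by positivity : (0:F) ≤ |x1| + |x2|),
      abs_of_nonneg (by positivity : (0:F) ≤ |y1| + |y2|)]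
    nlinarith [abs_nonneg x1, abs_nonneg x2, abs_nonneg y1, abs_nonneg y2,
      mul_nonneg (abs_nonneg x1) (abs_nonneg y2), mul_nonneg (abs_nonneg x2) (abs_nonneg y1)]
  · rintro _ ⟨x1, hx1, y1, hy1, rfl⟩ _ ⟨x2, hx2, y2, hy2, rfl⟩ z h1 h2
    simp only at h1 h2
    rcases le_total 0 z with hz | hz
    · refine mag_mul_key hA hB hx2 hy2 hz ?_
      calc z ≤ x2 * y2 := h2
        _ ≤ |x2 * y2| := le_abs_self _
        _ = |x2| * |y2| := abs_mul _ _
    · have : -z ∈ A * B := by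
        refine mag_mul_key hA hB hx1 hy1 (by linarith) ?_
        calc -z ≤ -(x1 * y1) := by linarith
          _ ≤ |x1 * y1| := neg_le_abs _
          _ = |x1| * |y1| := abs_mul _ _
      simpa using hneg _ this

lemma mag_add {A B : Set F} (hA : IsMagnitude A) (hB : IsMagnitude B) :
    IsMagnitude (A + B) := by
  rcases mag_subset_total hA hB with h | h
  · have : A + B = B := by
      apply Set.Subset.antisymm
      · rintro _ ⟨x, hx, y, hy, rfl⟩
        exact hB.2.1 x (h hx) y hy
      · intro y hy
        exact ⟨0, hA.1, y, hy, by simp⟩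
    rwa [this]
  · have : A + B = A := by
      apply Set.Subset.antisymm
      · rintro _ ⟨x, hx, y, hy, rfl⟩
        exact hA.2.1 x hx y (h hy)
      · intro x hx
        exact ⟨x, hx, 0, hB.1, by simp⟩
    rwa [this]

end Aux

theorem coset_product_is_coset {F : Type*} [Field F] [LinearOrder F] [IsStrictOrderedRing F]
    (A B : Set F) (hA : IsMagnitude A) (hB : IsMagnitude B) (a b : F) :
    IsMagnitude (a • B + b • A + A * B) ∧
      {a * b} + a • B + b • A + A * B = {a * b} + (a • B + b • A + A * B) := by
  constructor
  · exact mag_add (mag_add (mag_smul hB a) (mag_smul hA b)) (mag_mul hA hB)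
  · simp only [add_assoc]
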